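/- Let f : [0,1]^d → ℝ be continuous and let N be a positive integer. Then there exist a₁,...,a_N ∈ [0,1/2) such that |φ(x) − f(x)| ≤ 2ω_f(2√d)·2^{-N} + ω_f(2√d·2^{-N}) for all x ∈ [0,1]^d, where φ(x) = 2ω_f(2√d)·Σ_{j=1}^N 2^{-j} σ₃( a_j · 2^{ 1 + Σ_{i=1}^d 2^{(i−1)N} ⌊2^{N−1} x_i⌋ } ) + f(0) − ω_f(2√d). -/

import Mathlib

/-- σ₃(x) = 1 if the fractional part of x is ≥ 1/2, else 0. -/
noncomputable def sigma3 (x : ℝ) : ℝ := if (1:ℝ)/2 ≤ Int.fract x then 1 else 0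

/-- The unit cube [0,1]^d in Euclidean space. -/
def unitCube (d : ℕ) : Set (EuclideanSpace ℝ (Fin d)) := {x | ∀ i, x i ∈ Set.Icc (0:ℝ) 1}

/-- Modulus of continuity of f on [0,1]^d with respect to the Euclidean norm. -/
noncomputable def modCont (d : ℕ) (f : EuclideanSpace ℝ (Fin d) → ℝ) (r : ℝ) : ℝ :=
  sSup {t | ∃ x ∈ unitCube d, ∃ y ∈ unitCube d, ‖x - y‖ ≤ r ∧ t = |f x - f y|}

/-! ### Auxiliary lemmas -/

lemma unitCube_compact (d : ℕ) : IsCompact (unitCube d) := by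
  have h : unitCube d = (EuclideanSpace.equiv (Fin d) ℝ).symm ''
      (Set.pi Set.univ (fun _ : Fin d => Set.Icc (0:ℝ) 1)) := by
    ext x
    constructor
    · intro hx
      exact ⟨x, fun i _ => hx i, rfl⟩
    · rintro ⟨y, hy, rfl⟩ i
      exact hy i (Set.mem_univ i)
  rw [h]
  exact (isCompact_univ_pi fun _ => isCompact_Icc).image
    (EuclideanSpace.equiv (Fin d) ℝ).symm.continuous

lemma zero_mem_unitCube (d : ℕ) : (0 : EuclideanSpace ℝ (Fin d)) ∈ unitCube d := by
  intro i; simp [Set.mem_Icc]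

lemma modCont_bddAbove (d : ℕ) (f : EuclideanSpace ℝ (Fin d) → ℝ)
    (hf : ContinuousOn f (unitCube d)) (r : ℝ) :
    BddAbove {t | ∃ x ∈ unitCube d, ∃ y ∈ unitCube d, ‖x - y‖ ≤ r ∧ t = |f x - f y|} := by
  obtain ⟨M, hM⟩ := (unitCube_compact d).exists_bound_of_continuousOn hf
  refine ⟨2 * M, ?_⟩
  rintro t ⟨x, hx, y, hy, -, rfl⟩
  calc |f x - f y| ≤ |f x| + |f y| := abs_sub _ _
    _ ≤ M + M := add_le_add (hM x hx) (hM y hy)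
    _ = 2 * M := by ring

lemma abs_sub_le_modCont (d : ℕ) (f : EuclideanSpace ℝ (Fin d) → ℝ)
    (hf : ContinuousOn f (unitCube d)) {r : ℝ} {x y : EuclideanSpace ℝ (Fin d)}
    (hx : x ∈ unitCube d) (hy : y ∈ unitCube d) (h : ‖x - y‖ ≤ r) :
    |f x - f y| ≤ modCont d f r :=
  le_csSup (modCont_bddAbove d f hf r) ⟨x, hx, y, hy, h, rfl⟩

lemma modCont_nonneg (d : ℕ) (f : EuclideanSpace ℝ (Fin d) → ℝ)
    (hf : ContinuousOn f (unitCube d)) {r : ℝ} (hr : 0 ≤ r) :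
    0 ≤ modCont d f r := by
  have := abs_sub_le_modCont d f hf (zero_mem_unitCube d) (zero_mem_unitCube d)
    (by simpa using hr)
  simpa using (abs_nonneg _).trans this

lemma norm_le_of_coords (d : ℕ) (x y : EuclideanSpace ℝ (Fin d)) (c : ℝ) (hc : 0 ≤ c)
    (h : ∀ i, |x i - y i| ≤ c) : ‖x - y‖ ≤ Real.sqrt d * c := by
  rw [EuclideanSpace.norm_eq]
  have : ∑ i, (x i - y i)^2 ≤ (d : ℝ) * c^2 := by
    calc ∑ i, (x i - y i)^2 ≤ ∑ _i : Fin d, c^2 := by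
          refine Finset.sum_le_sum fun i _ => ?_
          have := h i
          nlinarith [abs_nonneg (x i - y i), sq_abs (x i - y i)]
      _ = (d:ℝ) * c^2 := by simp [mul_comm]
  calc Real.sqrt (∑ i, ‖(x-y) i‖^2) ≤ Real.sqrt ((d:ℝ) * c^2) := by
        apply Real.sqrt_le_sqrt
        have hxy : ∀ i, (x - y) i = x i - y i := fun i => rfl
        simp only [hxy, Real.norm_eq_abs, sq_abs]
        exact this
    _ = Real.sqrt d * c := by
        rw [Real.sqrt_mul (by positivity), Real.sqrt_sq hc]

lemma sum_bits (N n : ℕ) : ∑ i ∈ Finset.range N, (n / 2^i % 2) * 2^i = n % 2^N := by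
  induction N with
  | zero => simp [Nat.mod_one]
  | succ k ih =>
    rw [Finset.sum_range_succ, ih, pow_succ, Nat.mod_mul]
    ring

lemma sum_bits_real (N n : ℕ) (hn : n < 2^N) :
    ∑ j ∈ Finset.Icc 1 N, ((n / 2^(N-j) % 2 : ℕ) : ℝ) * (2:ℝ)^(-(j:ℤ)) = (n : ℝ) / 2^N := by
  have h2 : ((2:ℝ)^N) ≠ 0 := by positivity
  rw [eq_div_iff h2, Finset.sum_mul]
  have step : ∀ j ∈ Finset.Icc 1 N, ((n / 2^(N-j) % 2 : ℕ) : ℝ) * (2:ℝ)^(-(j:ℤ)) * (2:ℝ)^N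
      = (((n / 2^(N-j) % 2) * 2^(N-j) : ℕ) : ℝ) := by
    intro j hj
    obtain ⟨hj1, hj2⟩ := Finset.mem_Icc.mp hj
    push_cast
    rw [mul_assoc]
    congr 1
    rw [← zpow_natCast (2:ℝ) N, ← zpow_add₀ (two_ne_zero), ← zpow_natCast (2:ℝ) (N-j)]
    congr 1
    omega
  rw [Finset.sum_congr rfl step, ← Nat.cast_sum]
  have key : ∑ j ∈ Finset.Icc 1 N, (n / 2^(N-j) % 2) * 2^(N-j)
      = ∑ i ∈ Finset.range N, (n / 2^i % 2) * 2^i := by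
    rw [show Finset.Icc 1 N = Finset.Ico 1 (N+1) from rfl, Finset.sum_Ico_eq_sum_range]
    have h1 : N + 1 - 1 = N := by omega
    rw [h1]
    rw [← Finset.sum_range_reflect (fun i => (n / 2^i % 2) * 2^i) N]
    refine Finset.sum_congr rfl fun i hi => ?_
    have : N - (1 + i) = N - 1 - i := by omega
    rw [this]
  rw [key, sum_bits, Nat.mod_eq_of_lt hn]

lemma geom_tail (L : ℕ) : ∑ i ∈ Finset.range L, (2:ℝ)^(-(i:ℤ)-2) < 1/2 := by
  have he : ∀ i : ℕ, (2:ℝ)^(-(i:ℤ)-2) = (1/4) * (1/2:ℝ)^i := by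
    intro i
    have e1 : ((2:ℝ)^(-(i:ℤ))) = (1/2)^i := by
      rw [zpow_neg, zpow_natCast, ← inv_pow, one_div]
    have e2 : ((2:ℝ)^(-2:ℤ)) = 1/4 := by norm_num
    rw [show (-(i:ℤ)-2) = (-2) + (-(i:ℤ)) from by ring, zpow_add₀ (two_ne_zero), e1, e2]
  simp only [he, ← Finset.mul_sum]
  rw [geom_sum_eq (show (1/2:ℝ) ≠ 1 by norm_num) L,
    show (((1/2:ℝ)^L - 1)/(1/2-1)) = 2 - 2*(1/2)^L from by ring]
  have hp : (0:ℝ) < (1/2)^L := by positivity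
  nlinarith

lemma aseq_nonneg (b : ℕ → ℕ) (M : ℕ) :
    (0:ℝ) ≤ ∑ k ∈ Finset.range M, (b k : ℝ) * 2^(-(k:ℤ)-2) :=
  Finset.sum_nonneg fun k _ => by positivity

lemma aseq_lt (b : ℕ → ℕ) (hb : ∀ m, b m ≤ 1) (M : ℕ) :
    (∑ k ∈ Finset.range M, (b k : ℝ) * 2^(-(k:ℤ)-2)) < 1/2 := by
  calc ∑ k ∈ Finset.range M, (b k : ℝ) * 2^(-(k:ℤ)-2)
      ≤ ∑ k ∈ Finset.range M, (2:ℝ)^(-(k:ℤ)-2) := by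
        refine Finset.sum_le_sum fun k _ => ?_
        have h1 : (b k : ℝ) ≤ 1 := by exact_mod_cast hb k
        have h2 : (0:ℝ) < (2:ℝ)^(-(k:ℤ)-2) := by positivity
        nlinarith
    _ < 1/2 := geom_tail M

lemma sigma3_encode (b : ℕ → ℕ) (hb : ∀ m, b m ≤ 1) (M m : ℕ) (hm : m < M) :
    sigma3 ((∑ k ∈ Finset.range M, (b k : ℝ) * 2^(-(k:ℤ)-2)) * (2:ℝ)^(1 + (m:ℤ))) = b m := by
  have expand : (∑ k ∈ Finset.range M, (b k : ℝ) * 2^(-(k:ℤ)-2)) * (2:ℝ)^(1 + (m:ℤ))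
      = ∑ k ∈ Finset.range M, (b k : ℝ) * 2^((m:ℤ)-1-(k:ℤ)) := by
    rw [Finset.sum_mul]
    refine Finset.sum_congr rfl fun k _ => ?_
    rw [mul_assoc, ← zpow_add₀ (two_ne_zero : (2:ℝ) ≠ 0)]
    congr 2
    ring
  set T : ℝ := ∑ k ∈ Finset.Ico (m+1) M, (b k : ℝ) * 2^((m:ℤ)-1-(k:ℤ)) with hT
  have hT0 : 0 ≤ T := Finset.sum_nonneg fun k _ => by positivity
  have hT2 : T < 1/2 := by
    rw [hT, Finset.sum_Ico_eq_sum_range]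
    calc ∑ i ∈ Finset.range (M - (m+1)), (b (m+1+i) : ℝ) * 2^((m:ℤ)-1-((m+1+i:ℕ):ℤ))
        ≤ ∑ i ∈ Finset.range (M - (m+1)), (2:ℝ)^(-(i:ℤ)-2) := by
          refine Finset.sum_le_sum fun i _ => ?_
          have h1 : (b (m+1+i) : ℝ) ≤ 1 := by exact_mod_cast hb _
          have he : ((m:ℤ)-1-((m+1+i:ℕ):ℤ)) = -(i:ℤ)-2 := by push_cast; ring
          rw [he]
          have h2 : (0:ℝ) < (2:ℝ)^(-(i:ℤ)-2) := by positivity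
          nlinarith
      _ < 1/2 := geom_tail _
  set I : ℕ := ∑ k ∈ Finset.range m, (b k) * 2^(m-1-k) with hI
  have split : (∑ k ∈ Finset.range M, (b k : ℝ) * 2^((m:ℤ)-1-(k:ℤ)))
      = (I:ℝ) + (b m : ℝ) * 2^((m:ℤ)-1-(m:ℤ)) + T := by
    rw [← Finset.sum_range_add_sum_Ico _ (by omega : m+1 ≤ M), Finset.sum_range_succ]
    congr 1
    congr 1
    rw [hI, Nat.cast_sum]
    refine Finset.sum_congr rfl fun k hk => ?_
    have hk' : k < m := Finset.mem_range.mp hk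
    push_cast
    congr 1
    rw [← zpow_natCast (2:ℝ) (m-1-k)]
    congr 1
    omega
  have hbm : (b m : ℝ) * 2^((m:ℤ)-1-(m:ℤ)) = (b m : ℝ) / 2 := by
    rw [show ((m:ℤ)-1-(m:ℤ)) = (-1:ℤ) from by ring]
    norm_num
    ring
  have hr0 : 0 ≤ (b m : ℝ)/2 + T := by positivity
  have hr1 : (b m : ℝ)/2 + T < 1 := by
    have : (b m : ℝ) ≤ 1 := by exact_mod_cast hb m
    linarith
  have hfract : Int.fract ((∑ k ∈ Finset.range M, (b k : ℝ) * 2^(-(k:ℤ)-2)) * (2:ℝ)^(1 + (m:ℤ)))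
      = (b m : ℝ)/2 + T := by
    rw [expand, split, hbm,
      show ((I:ℝ)) + (b m:ℝ)/2 + T = ((b m:ℝ)/2 + T) + (I:ℝ) from by ring,
      Int.fract_add_natCast, Int.fract_eq_self.mpr ⟨hr0, hr1⟩]
  unfold sigma3
  rw [hfract]
  rcases Nat.le_one_iff_eq_zero_or_eq_one.mp (hb m) with h | h <;> rw [h]
  · rw [if_neg (by push_cast; linarith)]
    norm_num
  · rw [if_pos (by push_cast; linarith)]
    norm_num

/-! ### The cell index -/

noncomputable def idx8 (d N : ℕ) (x : EuclideanSpace ℝ (Fin d)) : ℤ :=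
  ∑ i : Fin d, (2:ℤ) ^ ((i:ℕ) * N) * ⌊(2:ℝ) ^ (N - 1) * x i⌋

lemma digit_nonneg {d N : ℕ} {x : EuclideanSpace ℝ (Fin d)} (hx : x ∈ unitCube d) (i : Fin d) :
    0 ≤ ⌊(2:ℝ) ^ (N - 1) * x i⌋ :=
  Int.floor_nonneg.mpr (by have := (hx i).1; positivity)

lemma digit_lt {d N : ℕ} (hN : 0 < N) {x : EuclideanSpace ℝ (Fin d)} (hx : x ∈ unitCube d)
    (i : Fin d) : ⌊(2:ℝ) ^ (N - 1) * x i⌋ < 2^N := by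
  rw [Int.floor_lt]
  have h1 : (2:ℝ)^(N-1) * x i ≤ 2^(N-1) := by
    have := (hx i).2
    have hp : (0:ℝ) < 2^(N-1) := by positivity
    nlinarith
  have h2 : (2:ℝ)^(N-1) * 2 = 2^N := by
    rw [← pow_succ]
    congr 1
    omega
  have hp : (0:ℝ) < 2^(N-1) := by positivity
  push_cast
  linarith

lemma idx8_nonneg {d N : ℕ} {x : EuclideanSpace ℝ (Fin d)} (hx : x ∈ unitCube d) :
    0 ≤ idx8 d N x :=
  Finset.sum_nonneg fun i _ => mul_nonneg (by positivity) (digit_nonneg hx i)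

lemma idx8_lt {d N : ℕ} (hN : 0 < N) {x : EuclideanSpace ℝ (Fin d)} (hx : x ∈ unitCube d) :
    idx8 d N x < 2^(N*d) := by
  have h1 : idx8 d N x ≤ ∑ i : Fin d, (2:ℤ)^((i:ℕ)*N) * (2^N - 1) := by
    refine Finset.sum_le_sum fun i _ => ?_
    have := digit_lt hN hx i
    have hp : (0:ℤ) < 2^((i:ℕ)*N) := by positivity
    nlinarith
  have h2 : ∑ i : Fin d, (2:ℤ)^((i:ℕ)*N) * (2^N - 1) = 2^(N*d) - 1 := by
    have : ∀ i : Fin d, (2:ℤ)^((i:ℕ)*N) * (2^N - 1) = ((2:ℤ)^N)^(i:ℕ) * (2^N - 1) := by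
      intro i
      rw [← pow_mul, mul_comm N]
    simp only [this]
    rw [← Finset.sum_mul, Fin.sum_univ_eq_sum_range (fun i => ((2:ℤ)^N)^i) d,
      geom_sum_mul, ← pow_mul]
  omega

lemma idx8_inj {d N : ℕ} (hN : 0 < N) {x y : EuclideanSpace ℝ (Fin d)}
    (hx : x ∈ unitCube d) (hy : y ∈ unitCube d) (h : idx8 d N x = idx8 d N y) (i : Fin d) :
    ⌊(2:ℝ) ^ (N - 1) * x i⌋ = ⌊(2:ℝ) ^ (N - 1) * y i⌋ := by
  set u : Fin d → Fin (2^N) := fun i => ⟨(⌊(2:ℝ)^(N-1) * x i⌋).toNat, by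
    have h1 := digit_lt hN hx i
    have h2 := digit_nonneg (N := N) hx i
    have h3 : ((2^N : ℕ) : ℤ) = 2^N := by push_cast; ring
    omega⟩ with hu
  set v : Fin d → Fin (2^N) := fun i => ⟨(⌊(2:ℝ)^(N-1) * y i⌋).toNat, by
    have h1 := digit_lt hN hy i
    have h2 := digit_nonneg (N := N) hy i
    have h3 : ((2^N : ℕ) : ℤ) = 2^N := by push_cast; ring
    omega⟩ with hv
  have key : ∀ (z : EuclideanSpace ℝ (Fin d)) (hz : z ∈ unitCube d),
      ((∑ i : Fin d, ((⌊(2:ℝ)^(N-1) * z i⌋).toNat) * (2^N)^(i:ℕ) : ℕ) : ℤ) = idx8 d N z := by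
    intro z hz
    rw [Nat.cast_sum]
    refine Finset.sum_congr rfl fun i _ => ?_
    push_cast
    rw [Int.toNat_of_nonneg (digit_nonneg hz i), ← pow_mul, mul_comm N, mul_comm]
  have huv : finFunctionFinEquiv u = finFunctionFinEquiv v := by
    apply Fin.val_injective
    have hu' : (finFunctionFinEquiv u : ℕ) = ∑ i : Fin d, ((⌊(2:ℝ)^(N-1) * x i⌋).toNat) * (2^N)^(i:ℕ) :=
      finFunctionFinEquiv_apply u
    have hv' : (finFunctionFinEquiv v : ℕ) = ∑ i : Fin d, ((⌊(2:ℝ)^(N-1) * y i⌋).toNat) * (2^N)^(i:ℕ) :=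
      finFunctionFinEquiv_apply v
    have k1 := key x hx
    have k2 := key y hy
    omega
  have h3 : (u i).val = (v i).val :=
    congrArg Fin.val (congrFun (finFunctionFinEquiv.injective huv) i)
  simp only [hu, hv] at h3
  have h1 := digit_nonneg (N := N) hx i
  have h2 := digit_nonneg (N := N) hy i
  omega

lemma idx8_dist {d N : ℕ} (hN : 0 < N) {x y : EuclideanSpace ℝ (Fin d)}
    (hx : x ∈ unitCube d) (hy : y ∈ unitCube d) (h : idx8 d N x = idx8 d N y) :
    ‖x - y‖ ≤ 2 * Real.sqrt d * (2:ℝ)^(-(N:ℤ)) := by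
  have hc : (0:ℝ) ≤ 2*(2:ℝ)^(-(N:ℤ)) := by positivity
  have hp : (0:ℝ) < (2:ℝ)^(N-1) := by positivity
  have hone : (2:ℝ)^(N-1) * (2*(2:ℝ)^(-(N:ℤ))) = 1 := by
    rw [← mul_assoc, show (2:ℝ)^(N-1) * 2 = 2^N from by rw [← pow_succ]; congr 1; omega,
      ← zpow_natCast (2:ℝ) N, ← zpow_add₀ (two_ne_zero : (2:ℝ) ≠ 0)]
    simp
  have hcoord : ∀ i, |x i - y i| ≤ 2*(2:ℝ)^(-(N:ℤ)) := by
    intro i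
    have hfl := idx8_inj hN hx hy h i
    have ha1 := Int.floor_le ((2:ℝ)^(N-1) * x i)
    have ha2 := Int.lt_floor_add_one ((2:ℝ)^(N-1) * x i)
    have hb1 := Int.floor_le ((2:ℝ)^(N-1) * y i)
    have hb2 := Int.lt_floor_add_one ((2:ℝ)^(N-1) * y i)
    rw [hfl] at ha1 ha2
    have key : (2:ℝ)^(N-1) * |x i - y i| < 1 := by
      rw [← abs_of_pos hp, ← abs_mul, mul_sub]
      rw [abs_sub_lt_iff]
      constructor <;> linarith
    nlinarith [abs_nonneg (x i - y i)]
  calc ‖x - y‖ ≤ Real.sqrt d * (2*(2:ℝ)^(-(N:ℤ))) := norm_le_of_coords d x y _ hc hcoord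
    _ = 2 * Real.sqrt d * (2:ℝ)^(-(N:ℤ)) := by ring

open Classical in
noncomputable def rep8 (d N : ℕ) (m : ℤ) : EuclideanSpace ℝ (Fin d) :=
  if h : ∃ x ∈ unitCube d, idx8 d N x = m then h.choose else 0

lemma rep8_mem (d N : ℕ) (m : ℤ) : rep8 d N m ∈ unitCube d := by
  rw [rep8]
  split_ifs with h
  · exact h.choose_spec.1
  · exact zero_mem_unitCube d

lemma rep8_idx {d N : ℕ} {m : ℤ} (h : ∃ x ∈ unitCube d, idx8 d N x = m) :
    idx8 d N (rep8 d N m) = m := by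
  rw [rep8, dif_pos h]
  exact h.choose_spec.2

lemma nval_approx (N : ℕ) (hN : 0 < N) (t : ℝ) (ht0 : 0 ≤ t) (ht1 : t ≤ 1) :
    (min (⌊(2:ℝ)^N * t⌋.toNat) (2^N - 1) < 2^N) ∧
    |t - ((min (⌊(2:ℝ)^N * t⌋.toNat) (2^N - 1) : ℕ) : ℝ)/2^N| ≤ (2:ℝ)^(-(N:ℤ)) := by
  have hK1 : 1 ≤ 2^N := Nat.one_le_two_pow
  have hKpos : (0:ℝ) < 2^N := by positivity
  have hzp : (2:ℝ)^(-(N:ℤ)) = 1/2^N := by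
    rw [zpow_neg, zpow_natCast, one_div]
  have hfl0 : 0 ≤ ⌊(2:ℝ)^N * t⌋ := Int.floor_nonneg.mpr (by positivity)
  have hfl1 : ((⌊(2:ℝ)^N * t⌋ : ℤ) : ℝ) ≤ 2^N * t := Int.floor_le _
  have hfl2 : (2:ℝ)^N * t < ⌊(2:ℝ)^N * t⌋ + 1 := Int.lt_floor_add_one _
  constructor
  · omega
  by_cases hcase : ⌊(2:ℝ)^N * t⌋.toNat ≤ 2^N - 1
  · rw [min_eq_left hcase]
    have hc : ((⌊(2:ℝ)^N * t⌋.toNat : ℕ) : ℝ) = ((⌊(2:ℝ)^N * t⌋ : ℤ) : ℝ) := by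
      exact_mod_cast congrArg (fun z : ℤ => (z:ℝ)) (Int.toNat_of_nonneg hfl0)
    rw [hc]
    have h2 : 0 ≤ t - ((⌊(2:ℝ)^N * t⌋ : ℤ) : ℝ)/2^N := by
      rw [sub_nonneg, div_le_iff₀ hKpos]
      linarith
    have h1 : t - ((⌊(2:ℝ)^N * t⌋ : ℤ) : ℝ)/2^N < 1/2^N := by
      rw [sub_lt_iff_lt_add, ← add_div, lt_div_iff₀ hKpos]
      linarith
    rw [abs_of_nonneg h2, hzp]
    linarith
  · rw [min_eq_right (by omega)]
    have hF : ((2:ℝ))^N ≤ ((⌊(2:ℝ)^N * t⌋ : ℤ) : ℝ) := by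
      have hpow : ((2^N : ℕ) : ℤ) = 2^N := by push_cast; ring
      have : (2^N : ℤ) ≤ ⌊(2:ℝ)^N * t⌋ := by omega
      calc ((2:ℝ))^N = (((2^N : ℤ)) : ℝ) := by push_cast; ring
        _ ≤ _ := by exact_mod_cast this
    have ht : t = 1 := by nlinarith
    have hcast : (((2^N - 1 : ℕ)) : ℝ) = 2^N - 1 := by
      push_cast [Nat.cast_sub hK1]
      ring
    rw [ht, hcast, hzp, show (1:ℝ) - ((2:ℝ)^N - 1)/2^N = 1/2^N from by field_simp; ring]
    rw [abs_of_nonneg (by positivity)]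

noncomputable def tval8 (d N : ℕ) (f : EuclideanSpace ℝ (Fin d) → ℝ) (m : ℤ) : ℝ :=
  (f (rep8 d N m) - f 0 + modCont d f (2 * Real.sqrt d)) / (2 * modCont d f (2 * Real.sqrt d))

noncomputable def nval8 (d N : ℕ) (f : EuclideanSpace ℝ (Fin d) → ℝ) (m : ℤ) : ℕ :=
  min (⌊(2:ℝ)^N * tval8 d N f m⌋.toNat) (2^N - 1)

noncomputable def bit8 (d N : ℕ) (f : EuclideanSpace ℝ (Fin d) → ℝ) (k j : ℕ) : ℕ :=
  nval8 d N f (k:ℤ) / 2^(N-j) % 2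

lemma bit8_le (d N : ℕ) (f : EuclideanSpace ℝ (Fin d) → ℝ) (k j : ℕ) : bit8 d N f k j ≤ 1 := by
  have := Nat.mod_two_eq_zero_or_one (nval8 d N f (k:ℤ) / 2^(N-j))
  unfold bit8
  omega

theorem stmt8 (d : ℕ) (hd : 0 < d) (f : EuclideanSpace ℝ (Fin d) → ℝ)
    (hf : ContinuousOn f (unitCube d)) (N : ℕ) (hN : 0 < N) :
    ∃ a : ℕ → ℝ, (∀ j, a j ∈ Set.Ico (0:ℝ) (1/2)) ∧
      ∀ x ∈ unitCube d,
        |(2 * modCont d f (2 * Real.sqrt d) *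
            ∑ j ∈ Finset.Icc 1 N, (2:ℝ) ^ (-(j:ℤ)) *
              sigma3 (a j * (2:ℝ) ^
                (1 + ∑ i : Fin d, (2:ℤ) ^ ((i:ℕ) * N) * ⌊(2:ℝ) ^ (N - 1) * x i⌋))
          + f 0 - modCont d f (2 * Real.sqrt d)) - f x|
        ≤ 2 * modCont d f (2 * Real.sqrt d) * (2:ℝ) ^ (-(N:ℤ))
          + modCont d f (2 * Real.sqrt d * (2:ℝ) ^ (-(N:ℤ))) := by
  have hsd : (0:ℝ) ≤ Real.sqrt d := Real.sqrt_nonneg d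
  have hω0 : 0 ≤ modCont d f (2 * Real.sqrt d) := modCont_nonneg d f hf (by positivity)
  set ω := modCont d f (2 * Real.sqrt d) with hωdef
  have hdiam : ∀ z ∈ unitCube d, ∀ w ∈ unitCube d, ‖z - w‖ ≤ 2 * Real.sqrt d := by
    intro z hz w hw
    have h := norm_le_of_coords d z w 2 (by norm_num) (fun i => by
      have h1 := hz i
      have h2 := hw i
      rw [Set.mem_Icc] at h1 h2
      rw [abs_le]
      constructor <;> linarith [h1.1, h1.2, h2.1, h2.2])
    calc ‖z - w‖ ≤ Real.sqrt d * 2 := h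
      _ = 2 * Real.sqrt d := by ring
  have hmod2 : 0 ≤ modCont d f (2 * Real.sqrt d * (2:ℝ)^(-(N:ℤ))) :=
    modCont_nonneg d f hf (by positivity)
  by_cases hz : ω = 0
  · refine ⟨fun _ => 0, fun j => by norm_num, ?_⟩
    intro x hx
    have hfx : |f 0 - f x| ≤ ω :=
      abs_sub_le_modCont d f hf (zero_mem_unitCube d) hx (hdiam 0 (zero_mem_unitCube d) x hx)
    rw [hz] at hfx
    calc |(2 * ω * ∑ j ∈ Finset.Icc 1 N, (2:ℝ) ^ (-(j:ℤ)) *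
              sigma3 ((0:ℝ) * (2:ℝ) ^
                (1 + ∑ i : Fin d, (2:ℤ) ^ ((i:ℕ) * N) * ⌊(2:ℝ) ^ (N - 1) * x i⌋))
          + f 0 - ω) - f x| = |f 0 - f x| := by rw [hz]; congr 1; ring
      _ ≤ 2 * ω * (2:ℝ)^(-(N:ℤ)) + modCont d f (2 * Real.sqrt d * (2:ℝ)^(-(N:ℤ))) := by
          rw [hz]
          have := abs_nonneg (f 0 - f x)
          linarith
  · have hωpos : 0 < ω := lt_of_le_of_ne hω0 (Ne.symm hz)
    set M := 2^(N*d) with hMdef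
    refine ⟨fun j => ∑ k ∈ Finset.range M, (bit8 d N f k j : ℝ) * 2^(-(k:ℤ)-2),
      fun j => ⟨aseq_nonneg _ _, aseq_lt _ (fun k => bit8_le d N f k j) _⟩, ?_⟩
    intro x hx
    have hm0 : 0 ≤ idx8 d N x := idx8_nonneg hx
    have hmlt : idx8 d N x < 2^(N*d) := idx8_lt hN hx
    set m : ℤ := idx8 d N x with hmdef
    have hmnat : ((m.toNat : ℕ) : ℤ) = m := Int.toNat_of_nonneg hm0
    have hcastM : ((M:ℕ):ℤ) = 2^(N*d) := by rw [hMdef]; push_cast; ring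
    have hmM : m.toNat < M := by omega
    have hsum_eq : (∑ i : Fin d, (2:ℤ) ^ ((i:ℕ) * N) * ⌊(2:ℝ) ^ (N - 1) * x i⌋) = m := rfl
    -- the representative point
    set y := rep8 d N m with hydef
    have hy : y ∈ unitCube d := rep8_mem d N m
    have hfy : |f y - f 0| ≤ ω :=
      abs_sub_le_modCont d f hf hy (zero_mem_unitCube d) (hdiam y hy 0 (zero_mem_unitCube d))
    have ht0 : 0 ≤ tval8 d N f m := by
      unfold tval8
      rw [← hydef, ← hωdef]
      have := (abs_le.mp hfy).1
      apply div_nonneg <;> linarith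
    have ht1 : tval8 d N f m ≤ 1 := by
      unfold tval8
      rw [← hydef, ← hωdef]
      rw [div_le_one (by linarith)]
      have := (abs_le.mp hfy).2
      linarith
    obtain ⟨hnlt, happrox⟩ := nval_approx N hN (tval8 d N f m) ht0 ht1
    have hnval_eq : nval8 d N f m = min (⌊(2:ℝ)^N * tval8 d N f m⌋.toNat) (2^N - 1) := rfl
    rw [← hnval_eq] at hnlt happrox
    -- evaluate the sigma3 sum
    have hsig : ∀ j, sigma3 ((∑ k ∈ Finset.range M, (bit8 d N f k j : ℝ) * 2^(-(k:ℤ)-2))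
        * (2:ℝ)^(1 + m)) = (bit8 d N f m.toNat j : ℝ) := by
      intro j
      rw [← hmnat]
      exact sigma3_encode (fun k => bit8 d N f k j) (fun k => bit8_le d N f k j) M m.toNat hmM
    have hsum : ∑ j ∈ Finset.Icc 1 N, (2:ℝ) ^ (-(j:ℤ)) *
        sigma3 ((∑ k ∈ Finset.range M, (bit8 d N f k j : ℝ) * 2^(-(k:ℤ)-2)) * (2:ℝ)^(1 + m))
        = ((nval8 d N f m : ℕ) : ℝ) / 2^N := by
      rw [Finset.sum_congr rfl (fun j _ => by rw [hsig j, mul_comm])]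
      have hbit_eq : ∀ j, (bit8 d N f m.toNat j : ℝ) = ((nval8 d N f m / 2^(N-j) % 2 : ℕ) : ℝ) := by
        intro j
        unfold bit8
        rw [hmnat]
      rw [Finset.sum_congr rfl (fun j _ => by rw [hbit_eq j])]
      exact sum_bits_real N (nval8 d N f m) hnlt
    rw [hsum_eq, hsum]
    -- final estimate
    have hidxy : idx8 d N y = m := rep8_idx ⟨x, hx, rfl⟩
    have hdistxy : ‖y - x‖ ≤ 2 * Real.sqrt d * (2:ℝ)^(-(N:ℤ)) :=
      idx8_dist hN hy hx (hidxy.trans hmdef)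
    have hfyx : |f y - f x| ≤ modCont d f (2 * Real.sqrt d * (2:ℝ)^(-(N:ℤ))) :=
      abs_sub_le_modCont d f hf hy hx hdistxy
    have hteq : 2 * ω * tval8 d N f m = f y - f 0 + ω := by
      unfold tval8
      rw [← hydef, ← hωdef]
      field_simp
    have hsplit : (2 * ω * (((nval8 d N f m : ℕ) : ℝ) / 2^N) + f 0 - ω) - f x
        = 2 * ω * (((nval8 d N f m : ℕ) : ℝ) / 2^N - tval8 d N f m) + (f y - f x) := by
      rw [mul_sub]
      linarith [hteq]
    rw [hsplit]
    calc |2 * ω * (((nval8 d N f m : ℕ) : ℝ) / 2^N - tval8 d N f m) + (f y - f x)|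
        ≤ |2 * ω * (((nval8 d N f m : ℕ) : ℝ) / 2^N - tval8 d N f m)| + |f y - f x| :=
          abs_add_le _ _
      _ ≤ 2 * ω * (2:ℝ)^(-(N:ℤ)) + modCont d f (2 * Real.sqrt d * (2:ℝ)^(-(N:ℤ))) := by
          refine add_le_add ?_ hfyx
          rw [abs_mul, abs_of_pos (by linarith : (0:ℝ) < 2 * ω), abs_sub_comm]
          exact mul_le_mul_of_nonneg_left happrox (by linarith)
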